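/- Under the normalized δ-approximate optimality condition — for all (θ,θ̄) ∈ Θ₀×Θ₁, (θ̃₁−θ̃₀)ᵀΣ⁻¹(θ−θ̃₀) + (θ̃₀−θ̃₁)ᵀΣ⁻¹(θ̄−θ̃₁) ≤ δ·‖Σ^{−1/2}(θ̃₀−θ̃₁)‖₂² — together with the exact first-order optimality condition for (θ₀,θ₁) (as in the unnormalized case with δ = 0), one has ‖Σ^{−1/2}(θ₀−θ₁)‖₂/(1+√δ) ≤ ‖Σ^{−1/2}(θ̃₀−θ̃₁)‖₂ ≤ ‖Σ^{−1/2}(θ₀−θ₁)‖₂/(1−√δ). -/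

import Mathlib

open Matrix

lemma key_dot {d : ℕ} (S B : Matrix (Fin d) (Fin d) ℝ)
    (hB : B.PosDef) (hBB : B * B = S⁻¹) (a b : Fin d → ℝ) :
    a ⬝ᵥ (S⁻¹).mulVec b = (B.mulVec a) ⬝ᵥ (B.mulVec b) := by
  have hBs : Bᵀ = B := by simpa [Matrix.IsSymm] using hB.isHermitian
  rw [← hBB, ← Matrix.mulVec_mulVec, Matrix.dotProduct_mulVec,
    ← Matrix.mulVec_transpose, hBs]

/-- under the *normalized* δ-approximate optimality condition together with
the exact first-order optimality condition for `(θ₀, θ₁)`, the norm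
`‖Σ^{-1/2}(θ̃₀−θ̃₁)‖` is sandwiched between `‖Σ^{-1/2}(θ₀−θ₁)‖/(1+√δ)` and
`‖Σ^{-1/2}(θ₀−θ₁)‖/(1−√δ)`.  `B` is the inverse square root of `Σ`. -/
theorem stmt_5 {d : ℕ} (S B : Matrix (Fin d) (Fin d) ℝ)
    (hS : S.PosDef) (hB : B.PosDef) (hBB : B * B = S⁻¹)
    (Θ₀ Θ₁ : Set (Fin d → ℝ)) (h₀ : Θ₀.Nonempty) (h₁ : Θ₁.Nonempty)
    (hc₀ : Convex ℝ Θ₀) (hc₁ : Convex ℝ Θ₁)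
    (θ₀ θ₁ θt₀ θt₁ : Fin d → ℝ) (hθ₀ : θ₀ ∈ Θ₀) (hθ₁ : θ₁ ∈ Θ₁)
    (hθt₀ : θt₀ ∈ Θ₀) (hθt₁ : θt₁ ∈ Θ₁) (δ : ℝ) (hδ : 0 < δ) (hδ1 : δ < 1)
    (hexact : ∀ θ ∈ Θ₀, ∀ θ' ∈ Θ₁,
      (θ₁ - θ₀) ⬝ᵥ (S⁻¹).mulVec (θ - θ₀) + (θ₀ - θ₁) ⬝ᵥ (S⁻¹).mulVec (θ' - θ₁) ≤ 0)
    (happrox : ∀ θ ∈ Θ₀, ∀ θ' ∈ Θ₁,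
      (θt₁ - θt₀) ⬝ᵥ (S⁻¹).mulVec (θ - θt₀) + (θt₀ - θt₁) ⬝ᵥ (S⁻¹).mulVec (θ' - θt₁) ≤
        δ * Real.sqrt (∑ i, (B.mulVec (θt₀ - θt₁)) i ^ 2) ^ 2) :
    Real.sqrt (∑ i, (B.mulVec (θ₀ - θ₁)) i ^ 2) / (1 + Real.sqrt δ) ≤
      Real.sqrt (∑ i, (B.mulVec (θt₀ - θt₁)) i ^ 2) ∧
    Real.sqrt (∑ i, (B.mulVec (θt₀ - θt₁)) i ^ 2) ≤
      Real.sqrt (∑ i, (B.mulVec (θ₀ - θ₁)) i ^ 2) / (1 - Real.sqrt δ) := by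
  set u := B.mulVec (θ₀ - θ₁) with hu
  set v := B.mulVec (θt₀ - θt₁) with hv
  set nu := Real.sqrt (∑ i, u i ^ 2) with hnu
  set nv := Real.sqrt (∑ i, v i ^ 2) with hnv
  have hsum_u : (0:ℝ) ≤ ∑ i, u i ^ 2 := Finset.sum_nonneg fun i _ => sq_nonneg _
  have hsum_v : (0:ℝ) ≤ ∑ i, v i ^ 2 := Finset.sum_nonneg fun i _ => sq_nonneg _
  have hnu0 : 0 ≤ nu := Real.sqrt_nonneg _
  have hnv0 : 0 ≤ nv := Real.sqrt_nonneg _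
  have hnu2 : nu ^ 2 = ∑ i, u i ^ 2 := Real.sq_sqrt hsum_u
  have hnv2 : nv ^ 2 = ∑ i, v i ^ 2 := Real.sq_sqrt hsum_v
  have huu : u ⬝ᵥ u = ∑ i, u i ^ 2 := by simp [dotProduct, sq]
  have hvv : v ⬝ᵥ v = ∑ i, v i ^ 2 := by simp [dotProduct, sq]
  -- Cauchy-Schwarz
  have hcs : u ⬝ᵥ v ≤ nu * nv := by
    have h1 : (u ⬝ᵥ v) ^ 2 ≤ (∑ i, u i ^ 2) * (∑ i, v i ^ 2) := by
      simpa [dotProduct] using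
        Finset.sum_mul_sq_le_sq_mul_sq Finset.univ u v
    calc u ⬝ᵥ v ≤ |u ⬝ᵥ v| := le_abs_self _
      _ = Real.sqrt ((u ⬝ᵥ v) ^ 2) := (Real.sqrt_sq_eq_abs _).symm
      _ ≤ Real.sqrt ((∑ i, u i ^ 2) * (∑ i, v i ^ 2)) := Real.sqrt_le_sqrt h1
      _ = nu * nv := by rw [Real.sqrt_mul hsum_u]
  -- from exact optimality: ‖u‖² ≤ ⟨u,v⟩
  have h1 : u ⬝ᵥ u ≤ u ⬝ᵥ v := by
    have := hexact θt₀ hθt₀ θt₁ hθt₁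
    rw [key_dot S B hB hBB, key_dot S B hB hBB] at this
    simp only [hu, hv, Matrix.mulVec_sub, sub_dotProduct,
      dotProduct_sub] at this ⊢
    have c1 := dotProduct_comm (B.mulVec θ₀) (B.mulVec θ₁)
    have c2 := dotProduct_comm (B.mulVec θ₀) (B.mulVec θt₀)
    have c3 := dotProduct_comm (B.mulVec θ₀) (B.mulVec θt₁)
    have c4 := dotProduct_comm (B.mulVec θ₁) (B.mulVec θt₀)
    have c5 := dotProduct_comm (B.mulVec θ₁) (B.mulVec θt₁)
    linarith
  -- from approximate optimality: ‖v‖² - ⟨v,u⟩ ≤ δ‖v‖²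
  have h2 : v ⬝ᵥ v - v ⬝ᵥ u ≤ δ * (v ⬝ᵥ v) := by
    have := happrox θ₀ hθ₀ θ₁ hθ₁
    rw [key_dot S B hB hBB, key_dot S B hB hBB, hnv2, ← hvv] at this
    simp only [hu, hv, Matrix.mulVec_sub, sub_dotProduct,
      dotProduct_sub] at this ⊢
    have c1 := dotProduct_comm (B.mulVec θt₀) (B.mulVec θt₁)
    have c2 := dotProduct_comm (B.mulVec θ₀) (B.mulVec θt₀)
    have c3 := dotProduct_comm (B.mulVec θ₀) (B.mulVec θt₁)
    have c4 := dotProduct_comm (B.mulVec θ₁) (B.mulVec θt₀)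
    have c5 := dotProduct_comm (B.mulVec θ₁) (B.mulVec θt₁)
    linarith
  have hvu : v ⬝ᵥ u = u ⬝ᵥ v := dotProduct_comm v u
  have hsd0 : 0 < Real.sqrt δ := Real.sqrt_pos.mpr hδ
  have hsd1 : Real.sqrt δ < 1 := by
    rw [show (1:ℝ) = Real.sqrt 1 by simp]
    exact Real.sqrt_lt_sqrt hδ.le hδ1
  have hdsd : δ ≤ Real.sqrt δ := by
    nlinarith [Real.sq_sqrt hδ.le, Real.sqrt_nonneg δ]
  -- nu ≤ nv
  have hle : nu ≤ nv := by
    rcases eq_or_lt_of_le hnu0 with h | h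
    · linarith
    · have : nu * nu ≤ nu * nv := by
        have : nu ^ 2 ≤ nu * nv := by rw [hnu2, ← huu]; linarith
        nlinarith
      exact le_of_mul_le_mul_left this h
  constructor
  · exact le_trans (div_le_self hnu0 (by linarith)) hle
  · rw [le_div_iff₀ (by linarith : (0:ℝ) < 1 - Real.sqrt δ)]
    have h3 : (1 - δ) * nv ^ 2 ≤ nu * nv := by
      rw [hnv2, ← hvv]; nlinarith [hcs]
    rcases eq_or_lt_of_le hnv0 with h | h
    · nlinarith
    · have h4 : (1 - δ) * nv ≤ nu := by
        have := mul_le_mul_of_nonneg_right h3 (le_of_lt (inv_pos.mpr h))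
        nlinarith
      nlinarith
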